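/- Let H ≥ 2 and let I = {0,1,2} ∪ {2H}, J = {0,1} ∪ {2H-1, 2H}. For h = 2H - 2: |hI| = 3H² - 2H and |hJ| = (2H-1)², hence |hJ| - |hI| = (H-1)² > 0. -/

import Mathlib

open Finset Pointwise

/-- `hsum h A` is the `h`-fold sumset of `A` (pointwise sum of `h` copies). -/
def hsum (h : ℕ) (A : Finset ℤ) : Finset ℤ := ∑ _i ∈ Finset.range h, A

/-- `transl t A` is the translate `t + A`. -/
def transl (t : ℤ) (A : Finset ℤ) : Finset ℤ := A.image (t + ·)


lemma hsum_zero (A : Finset ℤ) : hsum 0 A = {0} := rfl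

lemma hsum_succ (h : ℕ) (A : Finset ℤ) : hsum (h+1) A = A + hsum h A := by
  rw [hsum, Finset.sum_range_succ, add_comm]; rfl

lemma Icc_add_Icc' (a b c d : ℤ) (h1 : a ≤ b) (h2 : c ≤ d) :
    Icc a b + Icc c d = Icc (a+c) (b+d) := by
  ext x
  simp only [Finset.mem_add, Finset.mem_Icc]
  constructor
  · rintro ⟨u, hu, v, hv, rfl⟩; omega
  · intro hx
    exact ⟨max a (x - d), by omega, x - max a (x - d), by omega, by ring⟩

lemma hsum_Icc (h : ℕ) (a b : ℤ) (hab : a ≤ b) :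
    hsum h (Icc a b) = Icc (h * a) (h * b) := by
  induction h with
  | zero => simp [hsum_zero]
  | succ n ih =>
    rw [hsum_succ, ih, Icc_add_Icc' _ _ _ _ hab
      (mul_le_mul_of_nonneg_left hab (by positivity))]
    push_cast; ring_nf

lemma hsum_add (h : ℕ) (A B : Finset ℤ) : hsum h (A + B) = hsum h A + hsum h B := by
  induction h with
  | zero => simp [hsum_zero]
  | succ n ih => rw [hsum_succ, ih, hsum_succ, hsum_succ]; abel

lemma hsum_singleton (h : ℕ) (c : ℤ) : hsum h {c} = {h * c} := by
  induction h with
  | zero => simp [hsum_zero]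
  | succ n ih =>
    rw [hsum_succ, ih, Finset.singleton_add_singleton]
    congr 1; push_cast; ring

lemma hsum_union (h : ℕ) (A B : Finset ℤ) :
    hsum h (A ∪ B) = (range (h+1)).biUnion (fun k => hsum k A + hsum (h-k) B) := by
  induction h with
  | zero => simp [hsum_zero]
  | succ n ih =>
    rw [hsum_succ, ih, Finset.union_add]
    ext x
    simp only [Finset.mem_union, Finset.mem_add, Finset.mem_biUnion, Finset.mem_range,
      Nat.lt_succ_iff]
    constructor
    · rintro (⟨a, ha, b, hb, rfl⟩ | ⟨a, ha, b, hb, rfl⟩)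
      · obtain ⟨k, hk, c, hc, d, hd, rfl⟩ := hb
        exact ⟨k+1, by omega, a + c, by rw [hsum_succ]; exact Finset.add_mem_add ha hc,
          d, by simpa [Nat.succ_sub_succ] using hd, by ring⟩
      · obtain ⟨k, hk, c, hc, d, hd, rfl⟩ := hb
        refine ⟨k, by omega, c, hc, a + d, ?_, by ring⟩
        rw [show n + 1 - k = (n - k) + 1 by omega, hsum_succ]
        exact Finset.add_mem_add ha hd
    · rintro ⟨k, hk, c, hc, d, hd, rfl⟩
      rcases Nat.eq_zero_or_pos k with rfl | hkpos
      · rw [hsum_zero] at hc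
        simp only [Finset.mem_singleton] at hc
        subst hc
        rw [show n + 1 - 0 = n + 1 from rfl, hsum_succ] at hd
        obtain ⟨b, hb, e, he, rfl⟩ := Finset.mem_add.1 hd
        exact Or.inr ⟨b, hb, 0 + e, ⟨0, by omega, 0, by simp [hsum_zero], e, he, rfl⟩, by ring⟩
      · obtain ⟨k, rfl⟩ : ∃ m, k = m + 1 := ⟨k - 1, by omega⟩
        rw [hsum_succ] at hc
        obtain ⟨a, ha, e, he, rfl⟩ := Finset.mem_add.1 hc
        exact Or.inl ⟨a, ha, e + d, ⟨k, by omega, e, he, d, by simpa [Nat.succ_sub_succ] using hd, rfl⟩, by ring⟩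

lemma add_biUnion' (s : Finset ℤ) (t : Finset ℕ) (f : ℕ → Finset ℤ) :
    s + t.biUnion f = t.biUnion (fun k => s + f k) := by
  ext x
  simp only [Finset.mem_add, Finset.mem_biUnion]
  constructor
  · rintro ⟨a, ha, b, ⟨k, hk, hb⟩, rfl⟩
    exact ⟨k, hk, a, ha, b, hb, rfl⟩
  · rintro ⟨k, hk, a, ha, b, hb, rfl⟩
    exact ⟨a, ha, b, ⟨k, hk, hb⟩, rfl⟩

-- J computation: hsum (2m+2) ({0,1} ∪ {2n-1,2n}) = Icc 0 (2n(2n-2)) where n = m+2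
lemma J_interval (m : ℕ) :
    hsum (2*m+2) ({0,1} ∪ {2*((m:ℤ)+2)-1, 2*((m:ℤ)+2)}) =
      Icc 0 ((2*(m:ℤ)+4) * (2*(m:ℤ)+2)) := by
  set n : ℤ := (m:ℤ) + 2 with hn
  have hJ : ({0,1} ∪ {2*n-1, 2*n} : Finset ℤ) = Icc 0 1 + ({0} ∪ {2*n-1}) := by
    ext x
    simp only [Finset.mem_union, Finset.mem_insert, Finset.mem_singleton, Finset.mem_add,
      Finset.mem_Icc]
    constructor
    · rintro ((rfl | rfl) | (rfl | rfl))
      · exact ⟨0, by omega, 0, Or.inl rfl, by ring⟩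
      · exact ⟨1, by omega, 0, Or.inl rfl, by ring⟩
      · exact ⟨0, by omega, 2*n-1, Or.inr rfl, by ring⟩
      · exact ⟨1, by omega, 2*n-1, Or.inr rfl, by ring⟩
    · rintro ⟨a, ha, b, (rfl | rfl), rfl⟩ <;> omega
  rw [hJ, hsum_add, hsum_Icc _ _ _ (by omega), hsum_union]
  have hterm : ∀ k ∈ range (2*m+2+1),
      Icc ((2*m+2:ℕ) * (0:ℤ)) ((2*m+2:ℕ) * (1:ℤ)) +
        (hsum k {(0:ℤ)} + hsum (2*m+2-k) {2*n-1}) =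
      Icc ((↑(2*m+2-k) : ℤ) * (2*n-1)) ((↑(2*m+2-k) : ℤ) * (2*n-1) + (2*m+2)) := by
    intro k _
    rw [hsum_singleton, hsum_singleton, Finset.singleton_add_singleton,
      ← Finset.Icc_self, Icc_add_Icc' _ _ _ _
        (mul_le_mul_of_nonneg_left (by norm_num) (Int.natCast_nonneg _)) (le_refl _)]
    congr 1 <;> push_cast <;> ring
  rw [add_biUnion', Finset.biUnion_congr rfl hterm]
  ext x
  simp only [Finset.mem_biUnion, Finset.mem_range, Nat.lt_succ_iff, Finset.mem_Icc]
  constructor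
  · rintro ⟨k, hk, h1, h2⟩
    have hj : ((2*m+2-k : ℕ) : ℤ) ≤ 2*(m:ℤ)+2 := by
      have : (2*m+2-k : ℕ) ≤ 2*m+2 := by omega
      exact_mod_cast this
    have hj0 : (0:ℤ) ≤ ((2*m+2-k : ℕ) : ℤ) := Int.natCast_nonneg _
    have hnd : (0:ℤ) < 2*n-1 := by omega
    constructor
    · nlinarith
    · nlinarith
  · intro hx
    set d : ℤ := 2*n - 1 with hdd
    have hd0 : (0:ℤ) < d := by omega
    set q : ℤ := x / d with hq
    set r : ℤ := x % d with hr
    have hqr : d * q + r = x := Int.mul_ediv_add_emod x d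
    have hr0 : 0 ≤ r := Int.emod_nonneg x (by omega)
    have hrd : r < d := Int.emod_lt_of_pos x hd0
    have hq0 : 0 ≤ q := Int.ediv_nonneg hx.1 (le_of_lt hd0)
    have hqle : q ≤ 2*(m:ℤ)+2 := by
      by_contra hc
      push_neg at hc
      have : d * (2*(m:ℤ)+3) ≤ d * q := mul_le_mul_of_nonneg_left (by omega) (le_of_lt hd0)
      nlinarith [hx.2]
    refine ⟨2*m+2 - q.toNat, by omega, ?_⟩
    rw [show 2*m+2 - (2*m+2 - q.toNat) = q.toNat by omega]
    have hqt : ((q.toNat : ℤ)) = q := Int.toNat_of_nonneg hq0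
    rw [hqt]
    have e : q * d = d * q := mul_comm _ _
    constructor
    · linarith
    · have : r ≤ 2*(m:ℤ)+2 := by omega
      linarith

lemma I_interval (m : ℕ) :
    hsum (2*m+2) ({0,1,2} ∪ {2*((m:ℤ)+2)}) =
      Icc 0 (2*((m:ℤ)+2)^2 - 2) ∪
        (Icc (m+2) (2*m+2)).biUnion
          (fun k => Icc (2*((m:ℤ)+2)*k) (2*((m:ℤ)+2)*k + 2*((2*m+2-k : ℕ) : ℤ))) := by
  set n : ℤ := (m:ℤ) + 2 with hn
  have h012 : ({0,1,2} : Finset ℤ) = Icc 0 2 := by decide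
  rw [h012, hsum_union]
  have hterm : ∀ k ∈ range (2*m+2+1),
      hsum k (Icc (0:ℤ) 2) + hsum (2*m+2-k) {2*n} =
      Icc ((↑(2*m+2-k) : ℤ) * (2*n)) ((↑(2*m+2-k) : ℤ) * (2*n) + 2*k) := by
    intro k _
    rw [hsum_Icc _ _ _ (by omega), hsum_singleton, ← Finset.Icc_self,
      Icc_add_Icc' _ _ _ _ (mul_le_mul_of_nonneg_left (by norm_num) (Int.natCast_nonneg _))
        (le_refl _)]
    congr 1 <;> push_cast <;> ring
  rw [Finset.biUnion_congr rfl hterm]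
  ext x
  simp only [Finset.mem_biUnion, Finset.mem_range, Nat.lt_succ_iff, Finset.mem_Icc,
    Finset.mem_union]
  constructor
  · rintro ⟨k, hk, h1, h2⟩
    have hjc : ((2*m+2-k : ℕ) : ℤ) = 2*(m:ℤ)+2 - k := by
      have : (k:ℤ) ≤ 2*m+2 := by exact_mod_cast hk
      push_cast [Nat.cast_sub hk]; ring
    rcases le_or_gt k m with hkm | hkm
    -- j = 2m+2-k ≥ m+2 : right branch
    · right
      refine ⟨2*m+2-k, ⟨by omega, by omega⟩, ?_, ?_⟩
      · have : ((2*m+2-k : ℕ) : ℤ) * (2*n) = 2*n*((2*m+2-k : ℕ) : ℤ) := by ring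
        linarith [h1, this.symm.le]
      · rw [show 2*m+2-(2*m+2-k) = k by omega]
        have e : 2*n*((2*m+2-k:ℕ):ℤ) + 2*(k:ℕ) = ((2*m+2-k:ℕ):ℤ)*(2*n) + 2*k := by
          push_cast; ring
        rw [e]; exact h2
    -- j ≤ m+1 : left branch
    · left
      have hkz : (k:ℤ) ≤ 2*(m:ℤ)+2 := by exact_mod_cast hk
      have hkz2 : (m:ℤ) + 1 ≤ (k:ℤ) := by exact_mod_cast hkm
      constructor
      · have : (0:ℤ) ≤ ((2*m+2-k : ℕ) : ℤ) * (2*n) :=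
          mul_nonneg (Int.natCast_nonneg _) (by omega)
        linarith
      · rw [hjc] at h2
        nlinarith
  · rintro (⟨hx0, hx1⟩ | ⟨k, ⟨hk1, hk2⟩, h1, h2⟩)
    · -- divide by 2n
      have hd0 : (0:ℤ) < 2*n := by omega
      set q : ℤ := x / (2*n) with hq
      set r : ℤ := x % (2*n) with hr
      have hqr : 2*n * q + r = x := Int.mul_ediv_add_emod x (2*n)
      have hr0 : 0 ≤ r := Int.emod_nonneg x (by omega)
      have hrd : r < 2*n := Int.emod_lt_of_pos x hd0
      have hq0 : 0 ≤ q := Int.ediv_nonneg hx0 (le_of_lt hd0)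
      have hqle : q ≤ (m:ℤ)+1 := by
        by_contra hc
        push_neg at hc
        have : 2*n * ((m:ℤ)+2) ≤ 2*n * q := mul_le_mul_of_nonneg_left (by omega) (le_of_lt hd0)
        nlinarith
      refine ⟨2*m+2 - q.toNat, by omega, ?_, ?_⟩
      · rw [show 2*m+2-(2*m+2-q.toNat) = q.toNat by omega, Int.toNat_of_nonneg hq0]
        nlinarith
      · rw [show 2*m+2-(2*m+2-q.toNat) = q.toNat by omega, Int.toNat_of_nonneg hq0]
        have hc2 : ((2*m+2 - q.toNat : ℕ) : ℤ) = 2*(m:ℤ)+2 - q := by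
          have h1 : q.toNat ≤ 2*m+2 := by omega
          push_cast [Nat.cast_sub h1]
          rw [Int.toNat_of_nonneg hq0]
        rw [hc2]
        rcases le_or_gt q (m:ℤ) with hqm | hqm
        · nlinarith
        · have hq1 : q = (m:ℤ)+1 := by omega
          nlinarith
    · refine ⟨2*m+2-k, by omega, ?_, ?_⟩
      · rw [show 2*m+2-(2*m+2-k) = k by omega]
        have : ((k:ℕ):ℤ) * (2*n) = 2*n*k := by ring
        linarith
      · rw [show 2*m+2-(2*m+2-k) = k by omega]
        have e : ((k:ℕ):ℤ)*(2*n) + 2*((2*m+2-k:ℕ)) = 2*n*(k:ℤ) + 2*((2*m+2-k:ℕ):ℤ) := by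
          push_cast; ring
        rw [e]; exact h2

lemma odd_sum (M : ℕ) : ∑ i ∈ range M, (2*i+1) = M^2 := by
  induction M with
  | zero => simp
  | succ k ih => rw [Finset.sum_range_succ, ih]; ring

lemma I_card (m : ℕ) :
    (Icc (0:ℤ) (2*((m:ℤ)+2)^2 - 2) ∪
        (Icc (m+2) (2*m+2)).biUnion
          (fun k => Icc (2*((m:ℤ)+2)*k) (2*((m:ℤ)+2)*k + 2*((2*m+2-k : ℕ) : ℤ)))).card
      = 3*(m+2)^2 - 2*(m+2) := by
  set n : ℤ := (m:ℤ) + 2 with hn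
  have hd0 : (0:ℤ) < 2*n := by omega
  -- disjointness of the two parts
  have hdisj : Disjoint (Icc (0:ℤ) (2*n^2 - 2))
      ((Icc (m+2) (2*m+2)).biUnion
        (fun k => Icc (2*n*k) (2*n*k + 2*((2*m+2-k : ℕ) : ℤ)))) := by
    rw [Finset.disjoint_left]
    intro x hx hy
    simp only [Finset.mem_Icc] at hx
    simp only [Finset.mem_biUnion, Finset.mem_Icc] at hy
    obtain ⟨k, ⟨hk1, hk2⟩, h1, h2⟩ := hy
    have hk1' : (m:ℤ)+2 ≤ (k:ℤ) := by exact_mod_cast hk1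
    nlinarith [hx.2]
  -- pairwise disjointness inside biUnion
  have hpair : ∀ k ∈ Icc (m+2) (2*m+2), ∀ l ∈ Icc (m+2) (2*m+2), k ≠ l →
      Disjoint (Icc (2*n*(k:ℤ)) (2*n*k + 2*((2*m+2-k : ℕ) : ℤ)))
        (Icc (2*n*(l:ℤ)) (2*n*l + 2*((2*m+2-l : ℕ) : ℤ))) := by
    intro k hk l hl hne
    simp only [Finset.mem_Icc] at hk hl
    rw [Finset.disjoint_left]
    intro x hx hy
    simp only [Finset.mem_Icc] at hx hy
    have ek : ((2*m+2-k : ℕ) : ℤ) = 2*(m:ℤ)+2-k := by push_cast [Nat.cast_sub hk.2]; ring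
    have el : ((2*m+2-l : ℕ) : ℤ) = 2*(m:ℤ)+2-l := by push_cast [Nat.cast_sub hl.2]; ring
    rw [ek] at hx
    rw [el] at hy
    have hkk : (m:ℤ)+2 ≤ (k:ℤ) := by exact_mod_cast hk.1
    have hll : (m:ℤ)+2 ≤ (l:ℤ) := by exact_mod_cast hl.1
    rcases lt_or_gt_of_ne hne with h | h
    · have : (k:ℤ) + 1 ≤ (l:ℤ) := by exact_mod_cast h
      nlinarith [hx.2, hy.1]
    · have : (l:ℤ) + 1 ≤ (k:ℤ) := by exact_mod_cast h
      nlinarith [hy.2, hx.1]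
  rw [Finset.card_union_of_disjoint hdisj, Finset.card_biUnion hpair]
  have hIcc : (Icc (0:ℤ) (2*n^2 - 2)).card = 2*(m+2)^2 - 1 := by
    rw [Int.card_Icc]
    have : 2*n^2 - 2 + 1 - 0 = ((2*(m+2)^2 - 1 : ℕ) : ℤ) := by
      have : ((m+2:ℕ):ℤ) = n := by push_cast; ring
      push_cast [← this]
      push_cast [Nat.cast_sub (by nlinarith : 1 ≤ 2*(m+2)^2)]
      push_cast
      ring
    rw [this, Int.toNat_natCast]
  rw [hIcc]
  have hterm : ∀ k ∈ Icc (m+2) (2*m+2),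
      (Icc (2*n*(k:ℤ)) (2*n*k + 2*((2*m+2-k : ℕ) : ℤ))).card = 2*(2*m+2-k)+1 := by
    intro k hk
    rw [Int.card_Icc]
    set c : ℤ := 2*n*(k:ℤ) with hc
    omega
  rw [Finset.sum_congr rfl hterm]
  have himg : Icc (m+2) (2*m+2) = (range (m+1)).image (fun i => 2*m+2-i) := by
    ext a
    simp only [Finset.mem_Icc, Finset.mem_image, Finset.mem_range]
    constructor
    · intro ha; exact ⟨2*m+2-a, by omega, by omega⟩
    · rintro ⟨i, hi, rfl⟩; omega
  rw [himg, Finset.sum_image (by intro a ha b hb hab; simp at ha hb; beta_reduce at hab; omega)]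
  have : ∀ i ∈ range (m+1), 2*(2*m+2-(2*m+2-i))+1 = 2*i+1 := by intro i hi; simp at hi; omega
  rw [Finset.sum_congr rfl this, odd_sum]
  have h1 : 3*(m+2)^2 = 3*(m*m) + 12*m + 12 := by ring
  have h2 : (m+1)^2 = m*m + 2*m + 1 := by ring
  have h3 : 2*(m+2)^2 = 2*(m*m) + 8*m + 8 := by ring
  rw [h1, h2, h3]
  generalize m*m = s
  omega

lemma J_card (m : ℕ) :
    (Icc (0:ℤ) ((2*(m:ℤ)+4) * (2*(m:ℤ)+2))).card = (2*(m+2)-1)^2 := by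
  rw [Int.card_Icc]
  rw [show (2*(m:ℤ)+4)*(2*(m:ℤ)+2) + 1 - 0 = ((4*(m*m)+12*m+9 : ℕ) : ℤ) from by push_cast; ring,
    Int.toNat_natCast]
  rw [show 2*(m+2)-1 = 2*m+3 from by omega]
  ring

theorem stmt_17 (H : ℕ) (hH : 2 ≤ H) :
    (hsum (2 * H - 2) ({0, 1, 2} ∪ {2 * (H : ℤ)})).card = 3 * H ^ 2 - 2 * H ∧
    (hsum (2 * H - 2) ({0, 1} ∪ {2 * (H : ℤ) - 1, 2 * (H : ℤ)})).card = (2 * H - 1) ^ 2 ∧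
    ((hsum (2 * H - 2) ({0, 1} ∪ {2 * (H : ℤ) - 1, 2 * (H : ℤ)})).card : ℤ) -
        ((hsum (2 * H - 2) ({0, 1, 2} ∪ {2 * (H : ℤ)})).card : ℤ) = ((H : ℤ) - 1) ^ 2 ∧
    0 < ((H : ℤ) - 1) ^ 2 := by
  obtain ⟨m, rfl⟩ : ∃ m, H = m + 2 := ⟨H - 2, by omega⟩
  have e1 : 2*(m+2) - 2 = 2*m+2 := by omega
  have e2 : (((m+2:ℕ)):ℤ) = (m:ℤ)+2 := by push_cast; ring
  rw [e1, e2, I_interval, I_card, J_interval, J_card]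
  have e3 : (2*(m+2)-1)^2 = 4*(m*m)+12*m+9 := by
    rw [show 2*(m+2)-1 = 2*m+3 from by omega]; ring
  have e4 : 3*(m+2)^2-2*(m+2) = 3*(m*m)+10*m+8 := by
    rw [show 3*(m+2)^2 = 3*(m*m)+12*m+12 from by ring]
    generalize m*m = s
    omega
  have hpos : (0:ℤ) < ((m:ℤ)+2-1)^2 := by nlinarith [Int.natCast_nonneg m]
  refine ⟨rfl, rfl, ?_, hpos⟩
  rw [e3, e4]
  push_cast
  ring
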